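/- Let Ẽ be the z-deformation of an Anderson t-module E over O_L, acting on T_z(L_P)^d. For every nonzero a ∈ A and every nonzero x ∈ T_z(L_P)^d, one has Ẽ_a(x) ≠ 0. In other words, the Ã-module Ẽ(T_z(L_P)) is torsion-free over A. -/

import Mathlib

/-- (Torsion-freeness of `Ẽ(T_z(L_P))`.)  Let `R` stand for `L_P`
(a `K`-algebra, `K` the fraction field containing `A`), and let the `z`-deformation
`Ẽ_a = ∑_{i=0}^{r_a} E_{a,i} z^i τ^i` act on `(R[[z]])^d ⊇ T_z(L_P)^d`, where `τ` is
the `q`-Frobenius acting coefficientwise and `E_{a,0} = ∂_E(a) = a·I_d + N` with `N`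
nilpotent.  Then for every nonzero `a ∈ A` (viewed in `K`, hence a unit in `L_P`)
and every nonzero `x`, one has `Ẽ_a(x) ≠ 0`. -/
theorem stmt_10 {K R : Type*} [Field K] [CommRing R] [Algebra K R] [Nontrivial R]
    (q d r : ℕ) (hq : 2 ≤ q) (hd : 0 < d)
    (φ : R →+* R) (hφ : ∀ x : R, φ x = x ^ q)
    (C : ℕ → Matrix (Fin d) (Fin d) R)
    (a : K) (ha : a ≠ 0)
    (N : Matrix (Fin d) (Fin d) R) (hN : IsNilpotent N)
    (hC0 : C 0 = algebraMap K R a • (1 : Matrix (Fin d) (Fin d) R) + N)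
    (x : Fin d → PowerSeries R) (hx : x ≠ 0) :
    (fun j => ∑ i ∈ Finset.range (r + 1),
        (PowerSeries.X : PowerSeries R) ^ i *
          ∑ k, PowerSeries.C (C i j k) * (PowerSeries.map φ)^[i] (x k)) ≠ 0 := by
  intro h0
  -- find minimal coefficient degree n with nonzero coefficient vector
  have hex : ∃ n : ℕ, ∃ k, PowerSeries.coeff n (x k) ≠ 0 := by
    by_contra hc
    push_neg at hc
    apply hx
    funext k
    exact PowerSeries.ext fun n => by simpa using hc n k
  classical
  let n := Nat.find hex
  obtain ⟨k₀, hk₀⟩ := Nat.find_spec hex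
  have hmin : ∀ m < n, ∀ k, PowerSeries.coeff m (x k) = 0 := by
    intro m hm k
    by_contra hne
    exact absurd ⟨k, hne⟩ (Nat.find_min hex hm)
  set v : Fin d → R := fun k => PowerSeries.coeff n (x k) with hv
  have hvne : v ≠ 0 := by
    intro hve
    exact hk₀ (by simpa [hv] using congrFun hve k₀)
  -- iterated map coefficient
  have hcoeff_iter : ∀ (i m : ℕ) (f : PowerSeries R),
      PowerSeries.coeff m ((PowerSeries.map φ)^[i] f) = φ^[i] (PowerSeries.coeff m f) := by
    intro i
    induction i with
    | zero => simp
    | succ i ih =>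
      intro m f
      rw [Function.iterate_succ_apply, ih, PowerSeries.coeff_map, Function.iterate_succ_apply]
  -- take coefficient n of the equation at each j
  have hmv : (C 0).mulVec v = 0 := by
    funext j
    have hj := congrFun h0 j
    have hcn := congrArg (PowerSeries.coeff n) hj
    rw [map_sum] at hcn
    simp only [PowerSeries.coeff_X_pow_mul'] at hcn
    have hterm : ∀ i ∈ Finset.range (r + 1), i ≠ 0 →
        (if i ≤ n then (PowerSeries.coeff (n - i))
          (∑ k, PowerSeries.C (C i j k) * (PowerSeries.map φ)^[i] (x k)) else 0) = 0 := by
      intro i _ hi0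
      split_ifs with hle
      · rw [map_sum]
        refine Finset.sum_eq_zero fun k _ => ?_
        rw [PowerSeries.coeff_C_mul, hcoeff_iter, hmin (n - i) (by omega) k]
        simp
      · rfl
    rw [Finset.sum_eq_single_of_mem 0 (Finset.mem_range.mpr (Nat.succ_pos r)) hterm] at hcn
    simp only [if_pos (Nat.zero_le n), Nat.sub_zero, map_sum, PowerSeries.coeff_C_mul,
      Function.iterate_zero, id_eq, Pi.zero_apply, map_zero] at hcn
    simpa [Matrix.mulVec, dotProduct, hv] using hcn
  -- C 0 is a unit
  have hu : IsUnit (C 0) := by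
    rw [hC0]
    refine hN.isUnit_add_left_of_commute ?_ ?_
    · have hs : algebraMap K R a • (1 : Matrix (Fin d) (Fin d) R) =
          Matrix.scalar (Fin d) (algebraMap K R a) := by
        rw [Matrix.scalar_apply]
        ext i j
        by_cases h : i = j <;> simp [h, Matrix.diagonal]
      rw [hs]
      exact IsUnit.map (Matrix.scalar (Fin d)) ((ha.isUnit).map (algebraMap K R))
    · exact (Commute.one_right N).smul_right _
  obtain ⟨u, hu'⟩ := hu
  set B : Matrix (Fin d) (Fin d) R := ((u⁻¹ : (Matrix (Fin d) (Fin d) R)ˣ) : Matrix (Fin d) (Fin d) R)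
  have h1 : B * C 0 = 1 := by rw [← hu']; exact u.inv_mul
  have hv0 : v = 0 := by
    calc v = (B * C 0).mulVec v := by rw [h1, Matrix.one_mulVec]
    _ = B.mulVec ((C 0).mulVec v) := by rw [Matrix.mulVec_mulVec]
    _ = 0 := by rw [hmv, Matrix.mulVec_zero]
  exact hvne hv0
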